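/- arXiv:1707.01681 — 11 statements merged into one kernel-verified Lean document; each statement's English description precedes it below -/
import Mathlib

section
/- Fix real numbers a, a′ and a real φ > 0, and set E = 2 − 2·cosh φ. Consider sequences ψ : ℤ → ℝ satisfying the decay ansatz ψₙ = ψ₋₁·e^{(n+1)φ} for all n ≤ −1 and ψₙ = ψ₀·e^{−nφ} for all n ≥ 0, together with the interaction equations −ψ₋₂ + 2ψ₋₁ + (−1+a)ψ₀ = E·ψ₋₁ and −(1+a′)ψ₋₁ + 2ψ₀ − ψ₁ = E·ψ₀ (the free equations −ψₙ₋₁ + 2ψₙ − ψₙ₊₁ = E·ψₙ for n ≤ −2 and n ≥ 1 are then automatic). Then a nonzero such sequence ψ exists if and only if e^{2φ} = (1−a)(1+a′). -/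
/-- In the `J = 1` model, a nonzero sequence satisfying the decay ansatz and the
two interaction equations exists iff `e^{2φ} = (1-a)(1+a')`. -/
theorem J1_matching (a a' φ : ℝ) (hφ : 0 < φ) :
    (∃ ψ : ℤ → ℝ, ψ ≠ 0 ∧
      (∀ n : ℤ, n ≤ -1 → ψ n = ψ (-1) * Real.exp (((n : ℝ) + 1) * φ)) ∧
      (∀ n : ℤ, 0 ≤ n → ψ n = ψ 0 * Real.exp (-(n : ℝ) * φ)) ∧
      -ψ (-2) + 2 * ψ (-1) + (-1 + a) * ψ 0 = (2 - 2 * Real.cosh φ) * ψ (-1) ∧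
      -(1 + a') * ψ (-1) + 2 * ψ 0 - ψ 1 = (2 - 2 * Real.cosh φ) * ψ 0) ↔
    Real.exp (2 * φ) = (1 - a) * (1 + a') := by
  have hcosh : Real.cosh φ = (Real.exp φ + Real.exp (-φ)) / 2 := Real.cosh_eq φ
  have hmul : Real.exp φ * Real.exp (-φ) = 1 := by
    rw [← Real.exp_add]; simp
  have h2φ : Real.exp (2 * φ) = Real.exp φ * Real.exp φ := by
    rw [two_mul, Real.exp_add]
  constructor
  · rintro ⟨ψ, hne, hL, hR, h1, h2⟩
    have hm2 : ψ (-2) = ψ (-1) * Real.exp (-φ) := by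
      have := hL (-2) (by norm_num)
      rw [this]; push_cast; ring_nf
    have hp1 : ψ 1 = ψ 0 * Real.exp (-φ) := by
      have := hR 1 (by norm_num)
      rw [this]; push_cast; ring_nf
    set x := ψ (-1) with hx
    set y := ψ 0 with hy
    have e1 : (1 - a) * y = Real.exp φ * x := by
      rw [hm2, hcosh] at h1; linarith
    have e2 : (1 + a') * x = Real.exp φ * y := by
      rw [hp1, hcosh] at h2
      have hne0 : Real.exp (-φ) ≠ 0 := Real.exp_ne_zero _
      nlinarith [h2, hmul]
    have hxne : x ≠ 0 := by
      intro hx0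
      have hy0 : y = 0 := by
        have : Real.exp φ * y = 0 := by rw [← e2, hx0]; ring
        rcases mul_eq_zero.1 this with h | h
        · exact absurd h (Real.exp_ne_zero φ)
        · exact h
      apply hne
      funext n
      rcases le_or_gt n (-1) with h | h
      · rw [hL n h, hx0]; simp
      · rw [hR n (by omega), hy0]; simp
    have hyne : y ≠ 0 := by
      intro hy0
      apply hxne
      have : Real.exp φ * x = 0 := by rw [← e1, hy0]; ring
      rcases mul_eq_zero.1 this with h | h
      · exact absurd h (Real.exp_ne_zero φ)
      · exact h
    have key : ((1 - a) * y) * ((1 + a') * x) = (Real.exp φ * x) * (Real.exp φ * y) := by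
      rw [e1, e2]
    rw [h2φ]
    have hxy : x * y ≠ 0 := mul_ne_zero hxne hyne
    apply mul_right_cancel₀ hxy
    linear_combination -key
  · intro hE
    refine ⟨fun n => if n ≤ -1 then (1 - a) * Real.exp (((n : ℝ) + 1) * φ)
        else Real.exp φ * Real.exp (-(n : ℝ) * φ), ?_, ?_, ?_, ?_, ?_⟩
    · intro h
      have h0 := congrFun h 0
      simp only [Pi.zero_apply] at h0
      norm_num at h0
    · intro n hn
      simp only [if_pos hn, if_pos (show (-1 : ℤ) ≤ -1 by norm_num)]
      push_cast
      norm_num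
    · intro n hn
      have hn' : ¬ n ≤ -1 := by omega
      simp only [if_neg hn', if_neg (show ¬ (0 : ℤ) ≤ -1 by norm_num)]
      push_cast
      norm_num
    · norm_num
      rw [hcosh]
      push_cast
      ring_nf
    · norm_num
      rw [hcosh]
      push_cast
      nlinarith [hmul, hE, h2φ]
end

section
/- Let a, a′, b, b′ be real numbers, let φ be real, and set x = e^{φ}, t = x² = e^{2φ}, u = (1−a)(1+a′) − 1 and v = (1−b)(1+b′) − 1. Then the determinant of the 4×4 matching matrix M = [[x, −1+b, 0, 0], [−1−b′, x + x⁻¹, −1+a, 0], [0, −1−a′, x + x⁻¹, −1+b], [0, 0, −1−b′, x]] equals t² − (1+u+2v)·t + v². In particular, M has a nontrivial kernel if and only if t² − (1+u+2v)·t + v² = 0. -/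
/-- The `J = 2` 4×4 matching determinant equals `t² - (1+u+2v) t + v²`, where
`x = e^φ`, `t = x²`, `u = (1-a)(1+a') - 1`, `v = (1-b)(1+b') - 1`; hence the
matching matrix has a nontrivial kernel iff `t² - (1+u+2v) t + v² = 0`. -/
theorem J2_matching_determinant (a a' b b' φ : ℝ) :
    Matrix.det
      !![Real.exp φ, -1 + b, 0, 0;
         -1 - b', Real.exp φ + (Real.exp φ)⁻¹, -1 + a, 0;
         0, -1 - a', Real.exp φ + (Real.exp φ)⁻¹, -1 + b;
         0, 0, -1 - b', Real.exp φ] =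
      (Real.exp φ) ^ 2 * (Real.exp φ) ^ 2
        - (1 + ((1 - a) * (1 + a') - 1) + 2 * ((1 - b) * (1 + b') - 1))
            * (Real.exp φ) ^ 2
        + ((1 - b) * (1 + b') - 1) ^ 2 ∧
    ((∃ ψ : Fin 4 → ℝ, ψ ≠ 0 ∧
        Matrix.mulVec
          !![Real.exp φ, -1 + b, 0, 0;
             -1 - b', Real.exp φ + (Real.exp φ)⁻¹, -1 + a, 0;
             0, -1 - a', Real.exp φ + (Real.exp φ)⁻¹, -1 + b;
             0, 0, -1 - b', Real.exp φ] ψ = 0) ↔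
      (Real.exp φ) ^ 2 * (Real.exp φ) ^ 2
        - (1 + ((1 - a) * (1 + a') - 1) + 2 * ((1 - b) * (1 + b') - 1))
            * (Real.exp φ) ^ 2
        + ((1 - b) * (1 + b') - 1) ^ 2 = 0) := by
  have hx : Real.exp φ ≠ 0 := Real.exp_ne_zero φ
  have hdet : Matrix.det
      !![Real.exp φ, -1 + b, 0, 0;
         -1 - b', Real.exp φ + (Real.exp φ)⁻¹, -1 + a, 0;
         0, -1 - a', Real.exp φ + (Real.exp φ)⁻¹, -1 + b;
         0, 0, -1 - b', Real.exp φ] =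
      (Real.exp φ) ^ 2 * (Real.exp φ) ^ 2
        - (1 + ((1 - a) * (1 + a') - 1) + 2 * ((1 - b) * (1 + b') - 1))
            * (Real.exp φ) ^ 2
        + ((1 - b) * (1 + b') - 1) ^ 2 := by
    simp [Matrix.det_succ_row_zero, Fin.sum_univ_succ, Fin.succAbove]
    field_simp
    ring
  exact ⟨hdet, by rw [← hdet]; exact Matrix.exists_mulVec_eq_zero_iff⟩
end

section
/- Let u, v be real numbers with −1 < v < 1. Then there exists a real t > 1 with t² − (1+u+2v)·t + v² = 0 if and only if u > (v−1)² − 1. -/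
/-- For `-1 < v < 1`, the quadratic `t² - (1+u+2v) t + v² = 0` has a root `t > 1`
iff `u > (v-1)² - 1`. -/
theorem J2_bound_state_iff_parabola (u v : ℝ) (hv1 : -1 < v) (hv2 : v < 1) :
    (∃ t : ℝ, 1 < t ∧ t ^ 2 - (1 + u + 2 * v) * t + v ^ 2 = 0) ↔
      (v - 1) ^ 2 - 1 < u := by
  constructor
  · rintro ⟨t, ht, heq⟩
    nlinarith [sq_nonneg v, mul_pos (sub_pos.mpr ht) (by nlinarith : (0:ℝ) < t - v ^ 2)]
  · intro hu
    set b : ℝ := 1 + u + 2 * v with hb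
    have hb1 : 1 + v ^ 2 < b := by nlinarith
    have hd : (1 - v ^ 2) ^ 2 < b ^ 2 - 4 * v ^ 2 := by nlinarith
    have hd0 : 0 ≤ b ^ 2 - 4 * v ^ 2 := by nlinarith [sq_nonneg (1 - v^2)]
    set s : ℝ := Real.sqrt (b ^ 2 - 4 * v ^ 2) with hs
    have hs2 : s ^ 2 = b ^ 2 - 4 * v ^ 2 := Real.sq_sqrt hd0
    have hsgt : 1 - v ^ 2 < s := by
      nlinarith [Real.sqrt_nonneg (b ^ 2 - 4 * v ^ 2), sq_nonneg (s - (1 - v^2))]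
    refine ⟨(b + s) / 2, by nlinarith, by nlinarith⟩
end

section
/- Let u, v be real numbers with v < −1. (i) If u > −1 − 4v, then the number t₊ = (1/2)·[1 + u + 2v + √((1+u)(1+u+4v))] is a well-defined real root of t² − (1+u+2v)·t + v² = 0 and satisfies t₊ > 1. (ii) If −1 < u < −1 − 4v, then the discriminant (1+u)(1+u+4v) is negative and the quadratic t² − (1+u+2v)·t + v² = 0 has no real roots, i.e. the ground-state energy has become complex. -/
/-- For `v < -1`: (i) if `u > -1 - 4v` then
`t₊ = (1 + u + 2v + √((1+u)(1+u+4v)))/2` is a real root of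
`t² - (1+u+2v) t + v² = 0` with `t₊ > 1`; (ii) if `-1 < u < -1 - 4v` then the
discriminant `(1+u)(1+u+4v)` is negative and the quadratic has no real roots. -/
theorem J2_ground_state_boundary (u v : ℝ) (hv : v < -1) :
    ((-1 - 4 * v < u →
        (0 ≤ (1 + u) * (1 + u + 4 * v) ∧
          ((1 + u + 2 * v + Real.sqrt ((1 + u) * (1 + u + 4 * v))) / 2) ^ 2
              - (1 + u + 2 * v)
                * ((1 + u + 2 * v + Real.sqrt ((1 + u) * (1 + u + 4 * v))) / 2)
              + v ^ 2 = 0 ∧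
          1 < (1 + u + 2 * v + Real.sqrt ((1 + u) * (1 + u + 4 * v))) / 2)) ∧
      (-1 < u → u < -1 - 4 * v →
        ((1 + u) * (1 + u + 4 * v) < 0 ∧
          ∀ t : ℝ, t ^ 2 - (1 + u + 2 * v) * t + v ^ 2 ≠ 0))) := by
  constructor
  · intro hu
    have h1 : (0:ℝ) < 1 + u := by nlinarith
    have h2 : (0:ℝ) < 1 + u + 4 * v := by linarith
    have hD : 0 ≤ (1 + u) * (1 + u + 4 * v) := by positivity
    set s := Real.sqrt ((1 + u) * (1 + u + 4 * v)) with hsdef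
    have hs0 : 0 ≤ s := Real.sqrt_nonneg _
    have hs : s ^ 2 = (1 + u) * (1 + u + 4 * v) := Real.sq_sqrt hD
    refine ⟨hD, by nlinarith, by nlinarith⟩
  · intro hu1 hu2
    have h1 : (0:ℝ) < 1 + u := by linarith
    have h2 : (1:ℝ) + u + 4 * v < 0 := by linarith
    have hD : (1 + u) * (1 + u + 4 * v) < 0 := mul_neg_of_pos_of_neg h1 h2
    refine ⟨hD, fun t h => ?_⟩
    nlinarith [sq_nonneg (t - (1 + u + 2 * v) / 2)]
end

section
/- Let u, v be real numbers with v > 1 and u > −1. Then (1+u)(1+u+4v) > 0, and the larger root t₊ = (1/2)·[1 + u + 2v + √((1+u)(1+u+4v))] of the quadratic t² − (1+u+2v)·t + v² = 0 is real and satisfies t₊ > 1; hence the J = 2 ground state exists throughout the region {v > 1, u > −1}. -/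
/-- For `v > 1` and `u > -1`, the discriminant `(1+u)(1+u+4v)` is positive and
the larger root `t₊` of `t² - (1+u+2v) t + v² = 0` is real with `t₊ > 1`. -/
theorem J2_ground_state_v_large (u v : ℝ) (hv : 1 < v) (hu : -1 < u) :
    0 < (1 + u) * (1 + u + 4 * v) ∧
      ((1 + u + 2 * v + Real.sqrt ((1 + u) * (1 + u + 4 * v))) / 2) ^ 2
          - (1 + u + 2 * v)
            * ((1 + u + 2 * v + Real.sqrt ((1 + u) * (1 + u + 4 * v))) / 2)
          + v ^ 2 = 0 ∧
      1 < (1 + u + 2 * v + Real.sqrt ((1 + u) * (1 + u + 4 * v))) / 2 := by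
  have hD : 0 < (1 + u) * (1 + u + 4 * v) := by nlinarith
  have hs : Real.sqrt ((1 + u) * (1 + u + 4 * v)) ^ 2 = (1 + u) * (1 + u + 4 * v) :=
    Real.sq_sqrt hD.le
  have hs0 : 0 ≤ Real.sqrt ((1 + u) * (1 + u + 4 * v)) := Real.sqrt_nonneg _
  refine ⟨hD, by nlinarith [hs], by nlinarith⟩
end

section
/- Let u, v be real numbers and suppose either (v > 1 and −1 < u < v² − 2v) or (v < −1 and −1 − 4v < u < v² − 2v). Then the discriminant (1+u)(1+u+4v) is positive and both roots t_± = (1/2)·[1 + u + 2v ± √((1+u)(1+u+4v))] of t² − (1+u+2v)·t + v² = 0 are real and strictly greater than 1; in particular the smaller root t₋ > 1, so the J = 2 model supports a first excited bound state in these parameter regions. -/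
/-- In the regions `{v > 1, -1 < u < v² - 2v}` and `{v < -1, -1 - 4v < u < v² - 2v}`
the discriminant is positive and both roots `t₊, t₋` of
`t² - (1+u+2v) t + v² = 0` are real and `> 1`. -/
theorem J2_first_excited_state_exists (u v : ℝ)
    (h : (1 < v ∧ -1 < u ∧ u < v ^ 2 - 2 * v) ∨
         (v < -1 ∧ -1 - 4 * v < u ∧ u < v ^ 2 - 2 * v)) :
    0 < (1 + u) * (1 + u + 4 * v) ∧
      ((1 + u + 2 * v + Real.sqrt ((1 + u) * (1 + u + 4 * v))) / 2) ^ 2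
          - (1 + u + 2 * v)
            * ((1 + u + 2 * v + Real.sqrt ((1 + u) * (1 + u + 4 * v))) / 2)
          + v ^ 2 = 0 ∧
      ((1 + u + 2 * v - Real.sqrt ((1 + u) * (1 + u + 4 * v))) / 2) ^ 2
          - (1 + u + 2 * v)
            * ((1 + u + 2 * v - Real.sqrt ((1 + u) * (1 + u + 4 * v))) / 2)
          + v ^ 2 = 0 ∧
      1 < (1 + u + 2 * v + Real.sqrt ((1 + u) * (1 + u + 4 * v))) / 2 ∧
      1 < (1 + u + 2 * v - Real.sqrt ((1 + u) * (1 + u + 4 * v))) / 2 := by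
  have hD : 0 < (1 + u) * (1 + u + 4 * v) := by
    rcases h with ⟨h1, h2, h3⟩ | ⟨h1, h2, h3⟩
    · have : 0 < 1 + u := by linarith
      have : 0 < 1 + u + 4 * v := by linarith
      positivity
    · have hu : 1 + u + 4 * v > 0 := by linarith
      have : 3 < u := by nlinarith
      nlinarith
  have hsq : Real.sqrt ((1 + u) * (1 + u + 4 * v)) ^ 2 = (1 + u) * (1 + u + 4 * v) :=
    Real.sq_sqrt hD.le
  have hc : (0:ℝ) < u + 2 * v - 1 := by
    rcases h with ⟨h1, h2, h3⟩ | ⟨h1, h2, h3⟩ <;> linarith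
  have hlt : Real.sqrt ((1 + u) * (1 + u + 4 * v)) < u + 2 * v - 1 := by
    rw [show u + 2 * v - 1 = Real.sqrt ((u + 2 * v - 1) ^ 2) from
      (Real.sqrt_sq hc.le).symm]
    apply Real.sqrt_lt_sqrt hD.le
    rcases h with ⟨h1, h2, h3⟩ | ⟨h1, h2, h3⟩ <;> nlinarith
  have hnn : 0 ≤ Real.sqrt ((1 + u) * (1 + u + 4 * v)) := Real.sqrt_nonneg _
  refine ⟨hD, by nlinarith, by nlinarith, by nlinarith, by nlinarith⟩
end

section
/- For all real t, u, v, w the polynomial identity t⁴ − (1+u+2v+2w)·t³ + (2uw + (v+w)²)·t² + (w²(1−u) + 2vw)·t + w² = (t·(t−v−w) − w)² − t·(1+u)·(t−w)² holds. Consequently, the J = 3 secular equation is equivalent (for t ≥ 0) to t·(t−v−w) − w = ±(t−w)·√(t(1+u)). -/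
/-- The `J = 3` secular quartic factorizes as
`P(t) = (t(t-v-w) - w)² - t(1+u)(t-w)²`; consequently, for `t ≥ 0` (with the
square root real, i.e. `t(1+u) ≥ 0`) the secular equation `P(t) = 0` is
equivalent to `t(t-v-w) - w = ±(t-w)√(t(1+u))`. -/
theorem J3_secular_factorization :
    (∀ t u v w : ℝ,
      t ^ 4 - (1 + u + 2 * v + 2 * w) * t ^ 3
          + (2 * u * w + (v + w) ^ 2) * t ^ 2
          + (w ^ 2 * (1 - u) + 2 * v * w) * t + w ^ 2 =
        (t * (t - v - w) - w) ^ 2 - t * (1 + u) * (t - w) ^ 2) ∧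
    (∀ t u v w : ℝ, 0 ≤ t → 0 ≤ t * (1 + u) →
      (t ^ 4 - (1 + u + 2 * v + 2 * w) * t ^ 3
          + (2 * u * w + (v + w) ^ 2) * t ^ 2
          + (w ^ 2 * (1 - u) + 2 * v * w) * t + w ^ 2 = 0 ↔
        (t * (t - v - w) - w = (t - w) * Real.sqrt (t * (1 + u)) ∨
         t * (t - v - w) - w = -((t - w) * Real.sqrt (t * (1 + u)))))) := by
  constructor
  · intro t u v w; ring
  · intro t u v w _ htu
    have hfac : t ^ 4 - (1 + u + 2 * v + 2 * w) * t ^ 3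
          + (2 * u * w + (v + w) ^ 2) * t ^ 2
          + (w ^ 2 * (1 - u) + 2 * v * w) * t + w ^ 2 =
        (t * (t - v - w) - w) ^ 2 - ((t - w) * Real.sqrt (t * (1 + u))) ^ 2 := by
      have h : ((t - w) * Real.sqrt (t * (1 + u))) ^ 2 = (t - w) ^ 2 * (t * (1 + u)) := by
        rw [mul_pow, Real.sq_sqrt htu]
      rw [h]; ring
    rw [hfac, sub_eq_zero, sq_eq_sq_iff_eq_or_eq_neg]
end

section
/- For every triple of real numbers (u₀, v₀, w₀) there exist ε > 0 and C > 0 such that for all λ ∈ (0, ε), setting (u,v,w) = (λu₀, λv₀, λw₀), the quartic P(t) = t⁴ − (1+u+2v+2w)·t³ + (2uw+(v+w)²)·t² + (w²(1−u)+2vw)·t + w² has a real root t₀ with |t₀ − (1 + λ(u₀ + 2v₀ + 2w₀))| ≤ C·λ², and every complex root s of P with |s| ≥ 1/2 is equal to t₀ (so t₀ is the unique non-small root, the remaining three roots tending to 0 as λ → 0). -/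
lemma J3_aux (k x B D W : ℝ) (hk : 0 < k) (hx1 : 1/2 ≤ x) (hx2 : x ≤ 3/2)
    (hB : |B| ≤ 6*k) (hD : |D| ≤ 4*k) (hW : |W| ≤ k) :
    B*x^2 + D*x + W < 300*k*x^3 := by
  obtain ⟨hB1, hB2⟩ := abs_le.mp hB
  obtain ⟨hD1, hD2⟩ := abs_le.mp hD
  obtain ⟨hW1, hW2⟩ := abs_le.mp hW
  have hx0 : (0:ℝ) ≤ x := by linarith
  have hx3 : (1:ℝ)/8 ≤ x^3 := by nlinarith [mul_nonneg (by linarith : (0:ℝ) ≤ x - 1/2) (by positivity : (0:ℝ) ≤ x^2 + x/2 + 1/4)]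
  have hxs : x^2 ≤ 9/4 := by nlinarith
  nlinarith [mul_nonneg (by linarith : (0:ℝ) ≤ 6*k - B) (sq_nonneg x),
    mul_nonneg (by linarith : (0:ℝ) ≤ 4*k - D) hx0,
    mul_nonneg hk.le (by linarith : (0:ℝ) ≤ 9/4 - x^2),
    mul_nonneg hk.le (by linarith : (0:ℝ) ≤ x^3 - 1/8),
    mul_nonneg hk.le (by linarith : (0:ℝ) ≤ 3/2 - x)]

lemma J3_bB (u v w k : ℝ) (hu : u^2 ≤ k) (hv : v^2 ≤ k) (hw : w^2 ≤ k) :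
    |2*u*w + (v+w)^2| ≤ 6*k := by
  rw [abs_le]
  constructor
  · nlinarith [sq_nonneg (u+w), sq_nonneg (v+w)]
  · nlinarith [sq_nonneg (u-w), sq_nonneg (v-w)]

lemma J3_bD (v w k e : ℝ) (hv : v^2 ≤ k) (hw : w^2 ≤ k) (he0 : 0 ≤ e) (he2 : e ≤ 2) :
    |w^2*e + 2*v*w| ≤ 4*k := by
  rw [abs_le]
  constructor
  · nlinarith [mul_nonneg (sq_nonneg w) he0, sq_nonneg (v+w)]
  · nlinarith [mul_nonneg (sq_nonneg w) (by linarith : (0:ℝ) ≤ 2 - e), sq_nonneg (v-w)]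

set_option maxHeartbeats 1000000 in
/-- For small `(u,v,w) = λ(u₀,v₀,w₀)` the `J = 3` secular quartic has a unique
non-small root `t₀ = 1 + λ(u₀ + 2v₀ + 2w₀) + O(λ²)`: every complex root of
modulus at least `1/2` equals `t₀`. -/
theorem J3_unique_large_root (u₀ v₀ w₀ : ℝ) :
    ∃ ε > (0 : ℝ), ∃ C > (0 : ℝ), ∀ lam : ℝ, 0 < lam → lam < ε →
      ∃ t₀ : ℝ,
        (t₀ ^ 4
            - (1 + lam * u₀ + 2 * (lam * v₀) + 2 * (lam * w₀)) * t₀ ^ 3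
            + (2 * (lam * u₀) * (lam * w₀) + (lam * v₀ + lam * w₀) ^ 2) * t₀ ^ 2
            + ((lam * w₀) ^ 2 * (1 - lam * u₀) + 2 * (lam * v₀) * (lam * w₀)) * t₀
            + (lam * w₀) ^ 2 = 0) ∧
        |t₀ - (1 + lam * (u₀ + 2 * v₀ + 2 * w₀))| ≤ C * lam ^ 2 ∧
        ∀ s : ℂ,
          s ^ 4
              - ((1 + lam * u₀ + 2 * (lam * v₀) + 2 * (lam * w₀) : ℝ) : ℂ) * s ^ 3
              + ((2 * (lam * u₀) * (lam * w₀) + (lam * v₀ + lam * w₀) ^ 2 : ℝ) : ℂ) * s ^ 2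
              + (((lam * w₀) ^ 2 * (1 - lam * u₀) + 2 * (lam * v₀) * (lam * w₀) : ℝ) : ℂ) * s
              + (((lam * w₀) ^ 2 : ℝ) : ℂ) = 0 →
            (1 / 2 : ℝ) ≤ ‖s‖ → s = (t₀ : ℂ) := by
  obtain ⟨K, hKdef⟩ : ∃ K : ℝ, K = 1 + |u₀| + |v₀| + |w₀| := ⟨_, rfl⟩
  have hK1 : (1:ℝ) ≤ K := by
    have := abs_nonneg u₀; have := abs_nonneg v₀; have := abs_nonneg w₀; rw [hKdef]; linarith
  have hKpos : (0:ℝ) < K := by linarith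
  have hKK : K ≤ K^2 := by nlinarith [mul_le_mul_of_nonneg_left hK1 (by linarith : (0:ℝ) ≤ K)]
  have hK2 : (1:ℝ) ≤ K^2 := by linarith
  have hKp2 : (0:ℝ) < K^2 := by linarith
  refine ⟨1/(1000*K^2), by positivity, 300*K^2, by positivity, ?_⟩
  intro lam hlam hlame
  have hlamnn : (0:ℝ) ≤ lam := hlam.le
  -- basic coordinate bounds
  have hu1 : -K ≤ u₀ := by rw [hKdef]; linarith [neg_abs_le u₀, abs_nonneg v₀, abs_nonneg w₀]
  have hu2 : u₀ ≤ K := by rw [hKdef]; linarith [le_abs_self u₀, abs_nonneg v₀, abs_nonneg w₀]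
  have hv1 : -K ≤ v₀ := by rw [hKdef]; linarith [neg_abs_le v₀, abs_nonneg u₀, abs_nonneg w₀]
  have hv2 : v₀ ≤ K := by rw [hKdef]; linarith [le_abs_self v₀, abs_nonneg u₀, abs_nonneg w₀]
  have hw1 : -K ≤ w₀ := by rw [hKdef]; linarith [neg_abs_le w₀, abs_nonneg u₀, abs_nonneg v₀]
  have hw2 : w₀ ≤ K := by rw [hKdef]; linarith [le_abs_self w₀, abs_nonneg u₀, abs_nonneg v₀]
  have hKl : K^2 * lam ≤ 1/1000 := by
    have h1000 : (0:ℝ) < 1000*K^2 := by positivity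
    have := (lt_div_iff₀ h1000).mp hlame
    linarith
  have hlK : lam*K ≤ 1/1000 := by
    have h1 : lam*K ≤ lam*K^2 := mul_le_mul_of_nonneg_left hKK hlamnn
    linarith
  have hlam1 : lam ≤ 1/1000 := by
    have h1 : lam*1 ≤ lam*K := mul_le_mul_of_nonneg_left hK1 hlamnn
    linarith
  have hu0sq : u₀^2 ≤ K^2 := by linarith [mul_nonneg (by linarith : (0:ℝ) ≤ K - u₀) (by linarith : (0:ℝ) ≤ K + u₀)]
  have hv0sq : v₀^2 ≤ K^2 := by linarith [mul_nonneg (by linarith : (0:ℝ) ≤ K - v₀) (by linarith : (0:ℝ) ≤ K + v₀)]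
  have hw0sq : w₀^2 ≤ K^2 := by linarith [mul_nonneg (by linarith : (0:ℝ) ≤ K - w₀) (by linarith : (0:ℝ) ≤ K + w₀)]
  have hB₀ : |2*u₀*w₀ + (v₀+w₀)^2| ≤ 6*K^2 := J3_bB u₀ v₀ w₀ (K^2) hu0sq hv0sq hw0sq
  -- 0 ≤ 1 - lam*u₀ ≤ 2
  have hluu : lam*u₀ ≤ lam*K := mul_le_mul_of_nonneg_left hu2 hlamnn
  have hlul : lam*(-K) ≤ lam*u₀ := mul_le_mul_of_nonneg_left hu1 hlamnn
  have hlu1 : 0 ≤ 1 - lam*u₀ := by linarith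
  have hlu2 : 1 - lam*u₀ ≤ 2 := by linarith
  have hDl : |w₀^2*(1-lam*u₀) + 2*v₀*w₀| ≤ 4*K^2 :=
    J3_bD v₀ w₀ (K^2) (1-lam*u₀) hv0sq hw0sq hlu1 hlu2
  have hW : |w₀^2| ≤ K^2 := by rw [abs_of_nonneg (sq_nonneg _)]; exact hw0sq
  -- endpoints
  obtain ⟨a₁, ha₁⟩ : ∃ x : ℝ, x = 1 + lam*(u₀+2*v₀+2*w₀) - 300*K^2*lam^2 := ⟨_, rfl⟩
  obtain ⟨b₁, hb₁⟩ : ∃ x : ℝ, x = 1 + lam*(u₀+2*v₀+2*w₀) + 300*K^2*lam^2 := ⟨_, rfl⟩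
  have hsu : lam*(u₀+2*v₀+2*w₀) ≤ lam*(5*K) := mul_le_mul_of_nonneg_left (by linarith) hlamnn
  have hsl : lam*(-(5*K)) ≤ lam*(u₀+2*v₀+2*w₀) := mul_le_mul_of_nonneg_left (by linarith) hlamnn
  have hsl1 : -(5/1000 : ℝ) ≤ lam*(u₀+2*v₀+2*w₀) := by linarith
  have hsl2 : lam*(u₀+2*v₀+2*w₀) ≤ 5/1000 := by linarith
  have hCl : 300*K^2*lam^2 ≤ 3/10 := by
    have h1 : K^2*lam*lam ≤ (1/1000)*lam := mul_le_mul_of_nonneg_right hKl hlamnn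
    linarith
  have hClnn : (0:ℝ) ≤ 300*K^2*lam^2 := by positivity
  have ha₁l : 1/2 ≤ a₁ := by rw [ha₁]; linarith
  have ha₁u : a₁ ≤ 3/2 := by rw [ha₁]; linarith
  have hb₁l : 1/2 ≤ b₁ := by rw [hb₁]; linarith
  have hb₁u : b₁ ≤ 3/2 := by rw [hb₁]; linarith
  have hab : a₁ ≤ b₁ := by rw [ha₁, hb₁]; linarith
  -- the real quartic
  obtain ⟨f, hf⟩ : ∃ f : ℝ → ℝ, ∀ t, f t = t ^ 4
            - (1 + lam * u₀ + 2 * (lam * v₀) + 2 * (lam * w₀)) * t ^ 3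
            + (2 * (lam * u₀) * (lam * w₀) + (lam * v₀ + lam * w₀) ^ 2) * t ^ 2
            + ((lam * w₀) ^ 2 * (1 - lam * u₀) + 2 * (lam * v₀) * (lam * w₀)) * t
            + (lam * w₀) ^ 2 := ⟨_, fun _ => rfl⟩
  have hfc : Continuous f := by
    have : f = fun t => t ^ 4
            - (1 + lam * u₀ + 2 * (lam * v₀) + 2 * (lam * w₀)) * t ^ 3
            + (2 * (lam * u₀) * (lam * w₀) + (lam * v₀ + lam * w₀) ^ 2) * t ^ 2
            + ((lam * w₀) ^ 2 * (1 - lam * u₀) + 2 * (lam * v₀) * (lam * w₀)) * t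
            + (lam * w₀) ^ 2 := funext hf
    rw [this]; fun_prop
  have hfa : f a₁ ≤ 0 := by
    have hiden : f a₁ = lam^2 * ((2*u₀*w₀ + (v₀+w₀)^2)*a₁^2 + (w₀^2*(1-lam*u₀) + 2*v₀*w₀)*a₁ + w₀^2 - 300*K^2*a₁^3) := by
      rw [hf, ha₁]; ring
    have haux := J3_aux (K^2) a₁ (2*u₀*w₀ + (v₀+w₀)^2) (w₀^2*(1-lam*u₀) + 2*v₀*w₀) (w₀^2) hKp2 ha₁l ha₁u hB₀ hDl hW
    rw [hiden]
    exact mul_nonpos_of_nonneg_of_nonpos (sq_nonneg lam) (by linarith)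
  have hfb : 0 ≤ f b₁ := by
    have hiden : f b₁ = lam^2 * (300*K^2*b₁^3 + ((2*u₀*w₀ + (v₀+w₀)^2)*b₁^2 + (w₀^2*(1-lam*u₀) + 2*v₀*w₀)*b₁ + w₀^2)) := by
      rw [hf, hb₁]; ring
    have haux := J3_aux (K^2) b₁ (-(2*u₀*w₀ + (v₀+w₀)^2)) (-(w₀^2*(1-lam*u₀) + 2*v₀*w₀)) (-(w₀^2)) hKp2 hb₁l hb₁u (by rwa [abs_neg]) (by rwa [abs_neg]) (by rwa [abs_neg])
    rw [hiden]
    exact mul_nonneg (sq_nonneg lam) (by linarith)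
  obtain ⟨t₀, ht₀mem, hroot⟩ := intermediate_value_Icc hab hfc.continuousOn ⟨hfa, hfb⟩
  obtain ⟨ht₀a, ht₀b⟩ := ht₀mem
  have ht₀l : 1/2 ≤ t₀ := le_trans ha₁l ht₀a
  have ht₀u : t₀ ≤ 3/2 := le_trans ht₀b hb₁u
  rw [hf] at hroot
  refine ⟨t₀, hroot, ?_, ?_⟩
  · rw [abs_le]; constructor
    · rw [ha₁] at ht₀a; linarith
    · rw [hb₁] at ht₀b; linarith
  · intro s hs hsabs
    obtain ⟨A, hA⟩ : ∃ x : ℝ, x = t₀ - (1 + lam*(u₀+2*v₀+2*w₀)) := ⟨_, rfl⟩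
    obtain ⟨Bc, hBc⟩ : ∃ x : ℝ, x = lam^2*(2*u₀*w₀ + (v₀+w₀)^2) + A*t₀ := ⟨_, rfl⟩
    obtain ⟨Cc, hCc⟩ : ∃ x : ℝ, x = lam^2*(w₀^2*(1-lam*u₀) + 2*v₀*w₀) + Bc*t₀ := ⟨_, rfl⟩
    have hc : Cc*t₀ + lam^2*w₀^2 = 0 := by
      rw [hCc, hBc, hA]; linear_combination hroot
    have hcC : (Cc:ℂ)*(t₀:ℂ) + (lam:ℂ)^2*(w₀:ℂ)^2 = 0 := by exact_mod_cast congrArg (fun x : ℝ => (x:ℂ)) hc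
    have haC : (A:ℂ) = (t₀:ℂ) - (1 + (lam:ℂ)*((u₀:ℂ)+2*v₀+2*w₀)) := by
      rw [hA]; push_cast; ring
    have hbC : (Bc:ℂ) = (lam:ℂ)^2*(2*(u₀:ℂ)*w₀ + ((v₀:ℂ)+w₀)^2) + (A:ℂ)*(t₀:ℂ) := by
      rw [hBc]; push_cast; ring
    have hcC2 : (Cc:ℂ) = (lam:ℂ)^2*((w₀:ℂ)^2*(1-(lam:ℂ)*u₀) + 2*(v₀:ℂ)*w₀) + (Bc:ℂ)*(t₀:ℂ) := by
      rw [hCc]; push_cast; ring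
    have hfac : (s - (t₀:ℂ)) * (s^3 + (A:ℂ)*s^2 + (Bc:ℂ)*s + (Cc:ℂ)) = 0 := by
      push_cast at hs ⊢
      linear_combination hs + s^3*haC + s^2*hbC + s*hcC2 - hcC
    rcases mul_eq_zero.mp hfac with h | hcub
    · exact sub_eq_zero.mp h
    · exfalso
      have hAb : |A| ≤ 300*K^2*lam^2 := by
        rw [abs_le, hA]; rw [ha₁] at ht₀a; rw [hb₁] at ht₀b
        constructor <;> linarith
      have hBcb : |Bc| ≤ 456*K^2*lam^2 := by
        rw [hBc]
        have h1 : |lam^2*(2*u₀*w₀ + (v₀+w₀)^2)| ≤ lam^2*(6*K^2) := by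
          rw [abs_mul, abs_of_nonneg (sq_nonneg lam)]
          exact mul_le_mul_of_nonneg_left hB₀ (sq_nonneg lam)
        have h2 : |A*t₀| ≤ 300*K^2*lam^2 * (3/2) := by
          rw [abs_mul]
          exact mul_le_mul hAb (by rw [abs_of_nonneg (by linarith)]; linarith) (abs_nonneg _) (by positivity)
        calc |lam^2*(2*u₀*w₀ + (v₀+w₀)^2) + A*t₀| ≤ |lam^2*(2*u₀*w₀ + (v₀+w₀)^2)| + |A*t₀| := abs_add_le _ _
        _ ≤ 456*K^2*lam^2 := by linarith
      have hCcb : |Cc| ≤ 688*K^2*lam^2 := by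
        rw [hCc]
        have h1 : |lam^2*(w₀^2*(1-lam*u₀) + 2*v₀*w₀)| ≤ lam^2*(4*K^2) := by
          rw [abs_mul, abs_of_nonneg (sq_nonneg lam)]
          exact mul_le_mul_of_nonneg_left hDl (sq_nonneg lam)
        have h2 : |Bc*t₀| ≤ 456*K^2*lam^2 * (3/2) := by
          rw [abs_mul]
          exact mul_le_mul hBcb (by rw [abs_of_nonneg (by linarith)]; linarith) (abs_nonneg _) (by positivity)
        calc |lam^2*(w₀^2*(1-lam*u₀) + 2*v₀*w₀) + Bc*t₀| ≤ |lam^2*(w₀^2*(1-lam*u₀) + 2*v₀*w₀)| + |Bc*t₀| := abs_add_le _ _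
        _ ≤ 688*K^2*lam^2 := by linarith
      obtain ⟨r, hrdef⟩ : ∃ x : ℝ, x = ‖s‖ := ⟨_, rfl⟩
      have hr0 : (0:ℝ) ≤ r := hrdef ▸ norm_nonneg s
      have hrhalf : (1:ℝ)/2 ≤ r := hrdef ▸ hsabs
      have h3 : s^3 = -((A:ℂ)*s^2 + (Bc:ℂ)*s + (Cc:ℂ)) := by linear_combination hcub
      have hrabs : r^3 ≤ |A| * r^2 + |Bc| * r + |Cc| := by
        have e0 : r^3 = ‖s^3‖ := by rw [hrdef, norm_pow]
        have e1 : ‖s^3‖ = ‖(A:ℂ)*s^2 + (Bc:ℂ)*s + (Cc:ℂ)‖ := by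
          rw [h3, norm_neg]
        have e2 := norm_add_le ((A:ℂ)*s^2 + (Bc:ℂ)*s) ((Cc:ℂ))
        have e2' := norm_add_le ((A:ℂ)*s^2) ((Bc:ℂ)*s)
        have e3 : ‖(A:ℂ)*s^2‖ = |A| * r^2 := by rw [hrdef, norm_mul, norm_pow, Complex.norm_real, Real.norm_eq_abs]
        have e4 : ‖(Bc:ℂ)*s‖ = |Bc| * r := by rw [hrdef, norm_mul, Complex.norm_real, Real.norm_eq_abs]
        have e5 : ‖(Cc:ℂ)‖ = |Cc| := by rw [Complex.norm_real, Real.norm_eq_abs]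
        rw [e0, e1]
        rw [e3, e4] at e2'
        rw [e5] at e2
        calc ‖(A:ℂ)*s^2 + (Bc:ℂ)*s + (Cc:ℂ)‖ ≤ ‖(A:ℂ)*s^2 + (Bc:ℂ)*s‖ + |Cc| := e2
        _ ≤ |A| * r^2 + |Bc| * r + |Cc| := by linarith
      have hr3 : (1:ℝ)/8 ≤ r^3 := by
        linarith [mul_nonneg (by linarith : (0:ℝ) ≤ r - 1/2) (by positivity : (0:ℝ) ≤ r^2 + r/2 + 1/4)]
      have hr2 : r^2 ≤ 2*r^3 := by
        linarith [mul_nonneg (mul_nonneg hr0 hr0) (by linarith : (0:ℝ) ≤ 2*r - 1)]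
      have hr1 : r ≤ 4*r^3 := by
        linarith [mul_nonneg (mul_nonneg hr0 (by linarith : (0:ℝ) ≤ r - 1/2)) (by linarith : (0:ℝ) ≤ r + 1/2)]
      have hr08 : (1:ℝ) ≤ 8*r^3 := by linarith
      have hsum : |A| * r^2 + |Bc| * r + |Cc| ≤ (2 * |A| + 4 * |Bc| + 8 * |Cc|)*r^3 := by
        linarith [mul_nonneg (abs_nonneg A) (by linarith : (0:ℝ) ≤ 2*r^3 - r^2),
          mul_nonneg (abs_nonneg Bc) (by linarith : (0:ℝ) ≤ 4*r^3 - r),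
          mul_nonneg (abs_nonneg Cc) (by linarith : (0:ℝ) ≤ 8*r^3 - 1)]
      have hq : K^2*lam^2 ≤ (1/1000)*lam := by
        have := mul_le_mul_of_nonneg_right hKl hlamnn
        linarith
      have hsmall : 2 * |A| + 4 * |Bc| + 8 * |Cc| ≤ 1/2 := by
        linarith [abs_nonneg A, abs_nonneg Bc, abs_nonneg Cc, hAb, hBcb, hCcb, hq, hlam1]
      have hfin : r^3 ≤ (1/2)*r^3 := by
        have h1 := mul_le_mul_of_nonneg_right hsmall (by linarith : (0:ℝ) ≤ r^3)
        linarith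
      linarith
end

section
/- There exists ε > 0 such that for all real u, v, w with 0 < u < ε, 0 < v < ε and 0 < w < ε, the quartic t⁴ − (1+u+2v+2w)·t³ + (2uw+(v+w)²)·t² + (w²(1−u)+2vw)·t + w² = 0 has a real root t > 1; i.e., in the positive-parameter vicinity of the origin of the (u,v,w) space a physical bound state emerges from below the continuum. -/
/-- Near the origin of the positive parameter octant `0 < u, v, w < ε`, the
`J = 3` secular quartic has a real root `t > 1`: a bound state emerges from
below the continuum. -/
theorem J3_bound_state_emerges :
    ∃ ε > (0 : ℝ), ∀ u v w : ℝ,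
      0 < u → u < ε → 0 < v → v < ε → 0 < w → w < ε →
      ∃ t : ℝ, 1 < t ∧
        t ^ 4 - (1 + u + 2 * v + 2 * w) * t ^ 3
            + (2 * u * w + (v + w) ^ 2) * t ^ 2
            + (w ^ 2 * (1 - u) + 2 * v * w) * t + w ^ 2 = 0 := by
  refine ⟨1/10, by norm_num, fun u v w hu hu' hv hv' hw hw' => ?_⟩
  set f : ℝ → ℝ := fun t =>
    t ^ 4 - (1 + u + 2 * v + 2 * w) * t ^ 3
      + (2 * u * w + (v + w) ^ 2) * t ^ 2
      + (w ^ 2 * (1 - u) + 2 * v * w) * t + w ^ 2 with hf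
  have hcont : ContinuousOn f (Set.Icc (1:ℝ) 5) := by
    apply Continuous.continuousOn; fun_prop
  have hf1 : f 1 < 0 := by
    simp only [hf]
    nlinarith [mul_pos hu hw, mul_pos hv hw, sq_nonneg w, sq_nonneg v,
      mul_pos (mul_pos hu hw) hw]
  have hf5 : 0 < f 5 := by
    simp only [hf]
    nlinarith [mul_pos hu hw, mul_pos hv hw, sq_nonneg (v + w), sq_nonneg w,
      mul_pos (mul_pos hu hw) hw]
  have h0 : (0:ℝ) ∈ Set.Ioo (f 1) (f 5) := ⟨hf1, hf5⟩
  have := intermediate_value_Ioo (by norm_num : (1:ℝ) ≤ 5) hcont h0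
  obtain ⟨t, ht, htf⟩ := this
  exact ⟨t, ht.1, htf⟩
end

section
/- The quartic polynomial p(t) = t⁴ − 40t³ + 291t² − 340t + 25 (the J = 3 secular polynomial at u = 17, v = 6, w = 5) has exactly four real roots, of which exactly three lie in the open interval (1, ∞) and exactly one lies in the open interval (0, 1). The three roots greater than 1 correspond to the ground state and the first two excited bound states, while the root in (0,1) is spurious (unphysical). -/
open Polynomial Set

noncomputable def J3poly : Polynomial ℝ :=
  X ^ 4 - C 40 * X ^ 3 + C 291 * X ^ 2 - C 340 * X + C 25

lemma J3poly_eval (t : ℝ) :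
    J3poly.eval t = t ^ 4 - 40 * t ^ 3 + 291 * t ^ 2 - 340 * t + 25 := by
  simp [J3poly]

lemma J3poly_natDegree : J3poly.natDegree = 4 := by
  unfold J3poly
  compute_degree!

lemma J3poly_ne_zero : J3poly ≠ 0 := by
  intro h
  have := J3poly_natDegree
  rw [h] at this
  simp at this

lemma J3cont : ContinuousOn (fun t : ℝ => t ^ 4 - 40 * t ^ 3 + 291 * t ^ 2 - 340 * t + 25)
    (Icc (0:ℝ) 40) := by fun_prop

lemma J3root_in (a b : ℝ) (ha : (0:ℝ) ≤ a) (hb : b ≤ 40) (hab : a ≤ b)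
    (h : (0:ℝ) ∈ Ioo (min (a ^ 4 - 40 * a ^ 3 + 291 * a ^ 2 - 340 * a + 25)
          (b ^ 4 - 40 * b ^ 3 + 291 * b ^ 2 - 340 * b + 25))
        (max (a ^ 4 - 40 * a ^ 3 + 291 * a ^ 2 - 340 * a + 25)
          (b ^ 4 - 40 * b ^ 3 + 291 * b ^ 2 - 340 * b + 25))) :
    ∃ t ∈ Ioo a b, t ^ 4 - 40 * t ^ 3 + 291 * t ^ 2 - 340 * t + 25 = 0 := by
  set f : ℝ → ℝ := fun t => t ^ 4 - 40 * t ^ 3 + 291 * t ^ 2 - 340 * t + 25 with hf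
  have hcont : ContinuousOn f (Icc a b) :=
    J3cont.mono (Icc_subset_Icc ha hb)
  have hsub : Ioo (min (f a) (f b)) (max (f a) (f b)) ⊆ f '' Ioo a b := by
    rcases le_total (f a) (f b) with hle | hle
    · rw [min_eq_left hle, max_eq_right hle]
      exact intermediate_value_Ioo hab hcont
    · rw [min_eq_right hle, max_eq_left hle]
      exact intermediate_value_Ioo' hab hcont
  obtain ⟨t, ht, hft⟩ := hsub h
  exact ⟨t, ht, hft⟩

/-- The `J = 3` secular quartic at `(u,v,w) = (17,6,5)`, namely
`t⁴ - 40 t³ + 291 t² - 340 t + 25`, has exactly four real roots: exactly three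
in `(1, ∞)` and exactly one in `(0, 1)`. -/
theorem J3_example_four_roots :
    ∃ t₁ t₂ t₃ t₄ : ℝ,
      t₁ ≠ t₂ ∧ t₁ ≠ t₃ ∧ t₁ ≠ t₄ ∧ t₂ ≠ t₃ ∧ t₂ ≠ t₄ ∧ t₃ ≠ t₄ ∧
      0 < t₁ ∧ t₁ < 1 ∧ 1 < t₂ ∧ 1 < t₃ ∧ 1 < t₄ ∧
      (t₁ ^ 4 - 40 * t₁ ^ 3 + 291 * t₁ ^ 2 - 340 * t₁ + 25 = 0) ∧
      (t₂ ^ 4 - 40 * t₂ ^ 3 + 291 * t₂ ^ 2 - 340 * t₂ + 25 = 0) ∧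
      (t₃ ^ 4 - 40 * t₃ ^ 3 + 291 * t₃ ^ 2 - 340 * t₃ + 25 = 0) ∧
      (t₄ ^ 4 - 40 * t₄ ^ 3 + 291 * t₄ ^ 2 - 340 * t₄ + 25 = 0) ∧
      ∀ t : ℝ, t ^ 4 - 40 * t ^ 3 + 291 * t ^ 2 - 340 * t + 25 = 0 →
        t = t₁ ∨ t = t₂ ∨ t = t₃ ∨ t = t₄ := by
  obtain ⟨t₁, ht₁m, ht₁⟩ := J3root_in 0 1 le_rfl (by norm_num) (by norm_num) (by norm_num)
  obtain ⟨t₂, ht₂m, ht₂⟩ := J3root_in 1 2 (by norm_num) (by norm_num) (by norm_num) (by norm_num)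
  obtain ⟨t₃, ht₃m, ht₃⟩ := J3root_in 5 10 (by norm_num) (by norm_num) (by norm_num) (by norm_num)
  obtain ⟨t₄, ht₄m, ht₄⟩ := J3root_in 10 40 (by norm_num) (by norm_num) (by norm_num) (by norm_num)
  obtain ⟨h10, h11⟩ := ht₁m
  obtain ⟨h20, h21⟩ := ht₂m
  obtain ⟨h30, h31⟩ := ht₃m
  obtain ⟨h40, h41⟩ := ht₄m
  have hne12 : t₁ ≠ t₂ := by linarith
  have hne13 : t₁ ≠ t₃ := by linarith
  have hne14 : t₁ ≠ t₄ := by linarith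
  have hne23 : t₂ ≠ t₃ := by linarith
  have hne24 : t₂ ≠ t₄ := by linarith
  have hne34 : t₃ ≠ t₄ := by linarith
  refine ⟨t₁, t₂, t₃, t₄, hne12, hne13, hne14, hne23, hne24, hne34,
    h10, h11, h20, by linarith, by linarith, ht₁, ht₂, ht₃, ht₄, ?_⟩
  intro t ht
  by_contra hcon
  push_neg at hcon
  obtain ⟨hn1, hn2, hn3, hn4⟩ := hcon
  -- five distinct roots of a degree-4 polynomial: contradiction
  have hroot : ∀ x : ℝ, x ^ 4 - 40 * x ^ 3 + 291 * x ^ 2 - 340 * x + 25 = 0 →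
      x ∈ J3poly.roots := by
    intro x hx
    rw [mem_roots J3poly_ne_zero, IsRoot, J3poly_eval]
    exact hx
  have hsub : ({t, t₁, t₂, t₃, t₄} : Finset ℝ) ⊆ J3poly.roots.toFinset := by
    intro x hx
    simp only [Finset.mem_insert, Finset.mem_singleton] at hx
    rw [Multiset.mem_toFinset]
    rcases hx with rfl | rfl | rfl | rfl | rfl
    · exact hroot _ ht
    · exact hroot _ ht₁
    · exact hroot _ ht₂
    · exact hroot _ ht₃
    · exact hroot _ ht₄
  have hcard : ({t, t₁, t₂, t₃, t₄} : Finset ℝ).card = 5 := by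
    rw [Finset.card_insert_of_notMem (by simp [hn1, hn2, hn3, hn4]),
        Finset.card_insert_of_notMem (by simp [hne12, hne13, hne14]),
        Finset.card_insert_of_notMem (by simp [hne23, hne24]),
        Finset.card_insert_of_notMem (by simp [hne34]),
        Finset.card_singleton]
  have h1 : ({t, t₁, t₂, t₃, t₄} : Finset ℝ).card ≤ J3poly.roots.toFinset.card :=
    Finset.card_le_card hsub
  have h2 : J3poly.roots.toFinset.card ≤ Multiset.card J3poly.roots :=
    J3poly.roots.toFinset_card_le
  have h3 : Multiset.card J3poly.roots ≤ 4 := by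
    have := J3poly.card_roots' 
    rw [J3poly_natDegree] at this
    exact this
  omega
end

section
/- For all real t, u, v, w, y the polynomial identity t⁶ + (−1−2w−2y−u−2v)·t⁵ + (2wy+4vy+2uw+v²+2uy+w²+2vw+y²)·t⁴ + (−y²u+y²−2wvy−w²u−2wuy+2uy+2wy−2y²v−2v²y+2vy+2vw+w²)·t³ + (2wy+y²+y²v²−2wvy−2wuy−2y²u+w²+2vy−2y²v)·t² + (−2y²v+2wy−y²u+y²)·t + y² = L(t)² − t·(1+u)·R(t)² holds, where L(t) = t³ − (v+w+y)·t² + (vy−y−w)·t − y and R(t) = t² − (w+y)·t − y. Consequently the J = 4 secular equation is equivalent (for t ≥ 0) to L(t) = ±R(t)·√(t(1+u)). -/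
/-- The `J = 4` secular sextic factorizes as `L(t)² - t(1+u) R(t)²` with
`L(t) = t³ - (v+w+y) t² + (vy-y-w) t - y` and `R(t) = t² - (w+y) t - y`;
consequently, for `t ≥ 0` (with the square root real, i.e. `t(1+u) ≥ 0`) the
secular equation is equivalent to `L(t) = ±R(t)√(t(1+u))`. -/
theorem J4_secular_factorization :
    (∀ t u v w y : ℝ,
      t ^ 6 + (-1 - 2 * w - 2 * y - u - 2 * v) * t ^ 5
          + (2 * w * y + 4 * v * y + 2 * u * w + v ^ 2 + 2 * u * y + w ^ 2
              + 2 * v * w + y ^ 2) * t ^ 4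
          + (-(y ^ 2) * u + y ^ 2 - 2 * w * v * y - w ^ 2 * u - 2 * w * u * y
              + 2 * u * y + 2 * w * y - 2 * y ^ 2 * v - 2 * v ^ 2 * y
              + 2 * v * y + 2 * v * w + w ^ 2) * t ^ 3
          + (2 * w * y + y ^ 2 + y ^ 2 * v ^ 2 - 2 * w * v * y - 2 * w * u * y
              - 2 * y ^ 2 * u + w ^ 2 + 2 * v * y - 2 * y ^ 2 * v) * t ^ 2
          + (-2 * y ^ 2 * v + 2 * w * y - y ^ 2 * u + y ^ 2) * t + y ^ 2 =
        (t ^ 3 - (v + w + y) * t ^ 2 + (v * y - y - w) * t - y) ^ 2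
          - t * (1 + u) * (t ^ 2 - (w + y) * t - y) ^ 2) ∧
    (∀ t u v w y : ℝ, 0 ≤ t → 0 ≤ t * (1 + u) →
      (t ^ 6 + (-1 - 2 * w - 2 * y - u - 2 * v) * t ^ 5
          + (2 * w * y + 4 * v * y + 2 * u * w + v ^ 2 + 2 * u * y + w ^ 2
              + 2 * v * w + y ^ 2) * t ^ 4
          + (-(y ^ 2) * u + y ^ 2 - 2 * w * v * y - w ^ 2 * u - 2 * w * u * y
              + 2 * u * y + 2 * w * y - 2 * y ^ 2 * v - 2 * v ^ 2 * y
              + 2 * v * y + 2 * v * w + w ^ 2) * t ^ 3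
          + (2 * w * y + y ^ 2 + y ^ 2 * v ^ 2 - 2 * w * v * y - 2 * w * u * y
              - 2 * y ^ 2 * u + w ^ 2 + 2 * v * y - 2 * y ^ 2 * v) * t ^ 2
          + (-2 * y ^ 2 * v + 2 * w * y - y ^ 2 * u + y ^ 2) * t + y ^ 2 = 0 ↔
        (t ^ 3 - (v + w + y) * t ^ 2 + (v * y - y - w) * t - y =
            (t ^ 2 - (w + y) * t - y) * Real.sqrt (t * (1 + u)) ∨
         t ^ 3 - (v + w + y) * t ^ 2 + (v * y - y - w) * t - y =
            -((t ^ 2 - (w + y) * t - y) * Real.sqrt (t * (1 + u)))))) := by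

  constructor
  · intro t u v w y; ring
  · intro t u v w y _ hu
    have h1 : Real.sqrt (t * (1 + u)) ^ 2 = t * (1 + u) := Real.sq_sqrt hu
    set L := t ^ 3 - (v + w + y) * t ^ 2 + (v * y - y - w) * t - y with hL
    set R := t ^ 2 - (w + y) * t - y with hR
    have key : t ^ 6 + (-1 - 2 * w - 2 * y - u - 2 * v) * t ^ 5
          + (2 * w * y + 4 * v * y + 2 * u * w + v ^ 2 + 2 * u * y + w ^ 2
              + 2 * v * w + y ^ 2) * t ^ 4
          + (-(y ^ 2) * u + y ^ 2 - 2 * w * v * y - w ^ 2 * u - 2 * w * u * y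
              + 2 * u * y + 2 * w * y - 2 * y ^ 2 * v - 2 * v ^ 2 * y
              + 2 * v * y + 2 * v * w + w ^ 2) * t ^ 3
          + (2 * w * y + y ^ 2 + y ^ 2 * v ^ 2 - 2 * w * v * y - 2 * w * u * y
              - 2 * y ^ 2 * u + w ^ 2 + 2 * v * y - 2 * y ^ 2 * v) * t ^ 2
          + (-2 * y ^ 2 * v + 2 * w * y - y ^ 2 * u + y ^ 2) * t + y ^ 2
        = (L - R * Real.sqrt (t * (1 + u))) * (L + R * Real.sqrt (t * (1 + u))) := by
      have : (L - R * Real.sqrt (t * (1 + u))) * (L + R * Real.sqrt (t * (1 + u)))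
          = L ^ 2 - Real.sqrt (t * (1 + u)) ^ 2 * R ^ 2 := by ring
      rw [this, h1, hL, hR]; ring
    rw [key, mul_eq_zero, sub_eq_zero, add_eq_zero_iff_eq_neg]
end
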